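/- Fix M, K ∈ ℕ with K ≤ M, bounds 0 < ρ₁ < ρ₂, matrices C_i ∈ ℝ^{p_i×m} defining closed polyhedral cones U_i = {u ∈ ℝ^m : C_i u ≤ 0}, and y ∈ ℝ^m. Let Γ_i = ‖proj_{U_i}(y)‖₂. Then the supremum of Σᵢ ⟨y, u_i⟩ over all tuples (u_i, γ_i, σ_i)_{i=1}^M satisfying u_i ∈ U_i, ‖u_i‖₂ ≤ σ_i, γ_iρ₁ ≤ σ_i ≤ γ_iρ₂, 0 ≤ γ_i ≤ 1, and Σᵢ γ_i ≤ K equals ρ₂ times the maximum over subsets S ⊆ {1,…,M} with |S| ≤ K of Σ_{i∈S} Γ_i, and this supremum is attained. -/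

import Mathlib

open Matrix
open scoped RealInnerProductSpace

set_option maxHeartbeats 1000000 in
/-- **Pointwise Hamiltonian maximization for the relaxed problem.** Let `Uᵢ = {u : Cᵢu ≤ 0}`
be polyhedral cones, `y ∈ ℝ^m`, and let `P i` be the metric projection of `y` onto `Uᵢ`,
so `Γᵢ = ‖P i‖`. The supremum of `∑ᵢ ⟪y, uᵢ⟫` over tuples `(uᵢ, γᵢ, σᵢ)` with `uᵢ ∈ Uᵢ`,
`‖uᵢ‖ ≤ σᵢ`, `γᵢρ₁ ≤ σᵢ ≤ γᵢρ₂`, `0 ≤ γᵢ ≤ 1` and `∑ᵢ γᵢ ≤ K` is attained and equals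
`ρ₂` times the maximum over subsets `S` with `|S| ≤ K` of `∑_{i∈S} Γᵢ`. -/
theorem hamiltonian_max_eq_rho2_mul_best_gains {m M : ℕ} (K : ℕ) (hK : K ≤ M)
    (ρ₁ ρ₂ : ℝ) (hρ1 : 0 < ρ₁) (hρ12 : ρ₁ < ρ₂)
    (p : Fin M → ℕ) (C : ∀ i : Fin M, Matrix (Fin (p i)) (Fin m) ℝ)
    (y : EuclideanSpace ℝ (Fin m))
    (P : Fin M → EuclideanSpace ℝ (Fin m))
    (hPU : ∀ i, ∀ j, (C i).mulVec (P i) j ≤ 0)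
    (hP : ∀ i, ∀ z : EuclideanSpace ℝ (Fin m),
      (∀ j, (C i).mulVec z j ≤ 0) → dist y (P i) ≤ dist y z) :
    ∃ V : ℝ,
      IsGreatest {x : ℝ | ∃ S : Finset (Fin M), S.card ≤ K ∧ x = ∑ i ∈ S, ‖P i‖} V ∧
      IsGreatest {r : ℝ |
        ∃ (u : Fin M → EuclideanSpace ℝ (Fin m)) (γ σ : Fin M → ℝ),
          (∀ i, (∀ j, (C i).mulVec (u i) j ≤ 0) ∧ ‖u i‖ ≤ σ i ∧
            γ i * ρ₁ ≤ σ i ∧ σ i ≤ γ i * ρ₂ ∧ 0 ≤ γ i ∧ γ i ≤ 1) ∧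
          (∑ i, γ i) ≤ (K : ℝ) ∧ r = ∑ i, ⟪y, u i⟫} (ρ₂ * V) := by
  have hρ2 : (0:ℝ) < ρ₂ := hρ1.trans hρ12
  -- the cone sets
  set U : Fin M → Set (EuclideanSpace ℝ (Fin m)) :=
    fun i => {z | ∀ j, (C i).mulVec z j ≤ 0} with hU
  -- variational inequality for the projection
  have hvar : ∀ i, ∀ z ∈ U i, ⟪y - P i, z - P i⟫ ≤ 0 := by
    intro i z hz
    by_contra hc
    push_neg at hc
    set a : ℝ := ⟪y - P i, z - P i⟫ with ha
    set q : ℝ := ‖z - P i‖ ^ 2 with hq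
    have hq0 : 0 ≤ q := sq_nonneg _
    set θ : ℝ := min 1 (a / (q + 1)) with hθ
    have hθpos : 0 < θ := lt_min one_pos (div_pos hc (by linarith))
    have hθ1 : θ ≤ 1 := min_le_left _ _
    have hθq : θ * q < 2 * a := by
      have h1 : θ ≤ a / (q + 1) := min_le_right _ _
      have h2 : θ * q ≤ (a / (q + 1)) * q := mul_le_mul_of_nonneg_right h1 hq0
      have h3 : (a / (q + 1)) * q < 2 * a := by
        rw [div_mul_eq_mul_div, div_lt_iff₀ (by linarith)]
        nlinarith
      linarith
    have hwmem : P i + θ • (z - P i) ∈ U i := by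
      intro j
      have hsplit : (C i).mulVec (P i + θ • (z - P i)) j
          = (C i).mulVec (P i) j + θ * ((C i).mulVec z j - (C i).mulVec (P i) j) := by
        rw [Matrix.mulVec_add, Matrix.mulVec_smul, Matrix.mulVec_sub]; rfl
      rw [WithLp.ofLp_add, WithLp.ofLp_smul, WithLp.ofLp_sub, hsplit]
      nlinarith [hPU i j, hz j]
    have hdist := hP i _ hwmem
    rw [dist_eq_norm, dist_eq_norm] at hdist
    have hsq : ‖y - P i‖ ^ 2 ≤ ‖y - (P i + θ • (z - P i))‖ ^ 2 :=
      pow_le_pow_left₀ (norm_nonneg _) hdist 2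
    have hrw : y - (P i + θ • (z - P i)) = (y - P i) - θ • (z - P i) := by abel
    have hexp : ‖(y - P i) - θ • (z - P i)‖ ^ 2
        = ‖y - P i‖ ^ 2 - 2 * (θ * a) + θ ^ 2 * q := by
      rw [ha, hq, norm_sub_sq_real, real_inner_smul_right, norm_smul, mul_pow,
        Real.norm_eq_abs, sq_abs]
    rw [hrw, hexp] at hsq
    nlinarith [sq_nonneg θ]
  -- consequences: `⟪y, u⟫ ≤ ‖P i‖ * ‖u‖` on the cone, and `⟪y, P i⟫ = ‖P i‖ ^ 2`
  have hinnerle : ∀ i, ∀ u ∈ U i, ⟪y, u⟫ ≤ ‖P i‖ * ‖u‖ := by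
    intro i u hu
    have hmem : P i + u ∈ U i := by
      intro j
      have : (C i).mulVec (P i + u) j = (C i).mulVec (P i) j + (C i).mulVec u j := by
        rw [Matrix.mulVec_add]; rfl
      rw [WithLp.ofLp_add, this]; exact add_nonpos (hPU i j) (hu j)
    have h1 := hvar i _ hmem
    rw [add_sub_cancel_left, inner_sub_left] at h1
    have h2 : ⟪y, u⟫ ≤ ⟪P i, u⟫ := by linarith
    exact h2.trans (real_inner_le_norm _ _)
  have hyP : ∀ i, ⟪y, P i⟫ = ‖P i‖ ^ 2 := by
    intro i
    have h0 : (0 : EuclideanSpace ℝ (Fin m)) ∈ U i := by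
      intro j
      simp [show ((0 : EuclideanSpace ℝ (Fin m)) : Fin m → ℝ) = 0 from rfl]
    have h2 : (2:ℝ) • P i ∈ U i := by
      intro j
      have : (C i).mulVec ((2:ℝ) • P i) j = 2 * (C i).mulVec (P i) j := by
        rw [Matrix.mulVec_smul]; rfl
      rw [WithLp.ofLp_smul, this]; nlinarith [hPU i j]
    have hA := hvar i _ h0
    have hB := hvar i _ h2
    rw [zero_sub, inner_neg_right, inner_sub_left, real_inner_self_eq_norm_sq] at hA
    have h2P : (2:ℝ) • P i - P i = P i := by
      rw [two_smul]; abel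
    rw [h2P, inner_sub_left, real_inner_self_eq_norm_sq] at hB
    nlinarith
  -- choose a best subset `S` of cardinality exactly `K`
  obtain ⟨S₀, _, hS₀card⟩ :=
    Finset.exists_superset_card_eq (s := (∅ : Finset (Fin M))) (by simp) (by simpa using hK)
  obtain ⟨S, hSmem, hSmax⟩ :=
    Finset.exists_max_image (Finset.powersetCard K (Finset.univ : Finset (Fin M)))
      (fun T => ∑ i ∈ T, ‖P i‖)
      ⟨S₀, Finset.mem_powersetCard.mpr ⟨Finset.subset_univ _, hS₀card⟩⟩
  have hScard : S.card = K := (Finset.mem_powersetCard.mp hSmem).2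
  set V : ℝ := ∑ i ∈ S, ‖P i‖ with hV
  have hSmax' : ∀ T : Finset (Fin M), T.card = K → ∑ i ∈ T, ‖P i‖ ≤ V := by
    intro T hT
    exact hSmax T (Finset.mem_powersetCard.mpr ⟨Finset.subset_univ _, hT⟩)
  -- `V` is the greatest value over subsets of cardinality `≤ K`
  have hgreatest1 :
      IsGreatest {x : ℝ | ∃ S : Finset (Fin M), S.card ≤ K ∧ x = ∑ i ∈ S, ‖P i‖} V := by
    constructor
    · exact ⟨S, hScard.le, rfl⟩
    · rintro x ⟨T, hTcard, rfl⟩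
      obtain ⟨T', hTT', hT'card⟩ :=
        Finset.exists_superset_card_eq hTcard (by simpa using hK)
      calc ∑ i ∈ T, ‖P i‖ ≤ ∑ i ∈ T', ‖P i‖ :=
            Finset.sum_le_sum_of_subset_of_nonneg hTT' (fun _ _ _ => norm_nonneg _)
        _ ≤ V := hSmax' T' hT'card
  -- exchange property
  have hexch : ∀ i ∈ S, ∀ j, j ∉ S → ‖P j‖ ≤ ‖P i‖ := by
    intro i hi j hj
    by_contra h
    push_neg at h
    have hjE : j ∉ S.erase i := fun hc => hj (Finset.mem_of_mem_erase hc)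
    have hTcard : (insert j (S.erase i)).card = K := by
      rw [Finset.card_insert_of_notMem hjE, Finset.card_erase_of_mem hi, hScard]
      have : 1 ≤ K := hScard ▸ Finset.card_pos.mpr ⟨i, hi⟩
      omega
    have hTsum := hSmax' _ hTcard
    rw [Finset.sum_insert hjE] at hTsum
    have := Finset.sum_erase_add S (fun i => ‖P i‖) hi
    simp only [hV] at hTsum this
    linarith
  -- the fractional bound
  have hfrac : ∀ γ : Fin M → ℝ, (∀ i, 0 ≤ γ i) → (∀ i, γ i ≤ 1) →
      (∑ i, γ i) ≤ (K:ℝ) → ∑ i, γ i * ‖P i‖ ≤ V := by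
    intro γ hγ0 hγ1 hγK
    rcases S.eq_empty_or_nonempty with hS | hS
    · have hK0 : K = 0 := by rw [← hScard, hS]; simp
      have hsum0 : ∑ i, γ i = 0 := le_antisymm (by rw [hK0] at hγK; simpa using hγK)
        (Finset.sum_nonneg fun i _ => hγ0 i)
      have hz : ∀ i ∈ Finset.univ, γ i = 0 :=
        (Finset.sum_eq_zero_iff_of_nonneg fun i _ => hγ0 i).mp hsum0
      have : ∑ i, γ i * ‖P i‖ = 0 :=
        Finset.sum_eq_zero fun i hi => by rw [hz i hi, zero_mul]
      rw [this, hV, hS]; simp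
    · obtain ⟨i₀, hi₀, hmin⟩ := S.exists_min_image (fun i => ‖P i‖) hS
      set t : ℝ := ‖P i₀‖ with ht
      have ht0 : 0 ≤ t := norm_nonneg _
      have htS : ∀ i ∈ S, t ≤ ‖P i‖ := hmin
      have htO : ∀ j, j ∉ S → ‖P j‖ ≤ t := fun j hj => hexch i₀ hi₀ j hj
      have step1 : ∑ i, γ i * ‖P i‖
          = (∑ i, γ i * (‖P i‖ - t)) + t * ∑ i, γ i := by
        rw [Finset.mul_sum, ← Finset.sum_add_distrib]
        exact Finset.sum_congr rfl fun i _ => by ring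
      have step2 : ∑ i, γ i * (‖P i‖ - t)
          ≤ ∑ i, (if i ∈ S then ‖P i‖ - t else 0) := by
        refine Finset.sum_le_sum fun i _ => ?_
        by_cases hi : i ∈ S
        · simp only [hi, if_true]
          nlinarith [hγ0 i, hγ1 i, htS i hi]
        · simp only [hi, if_false]
          nlinarith [hγ0 i, htO i hi]
      have step3 : ∑ i, (if i ∈ S then ‖P i‖ - t else 0) = V - K * t := by
        rw [Finset.sum_ite_mem, Finset.univ_inter, Finset.sum_sub_distrib,
          Finset.sum_const, hScard, nsmul_eq_mul]
      have step4 : t * ∑ i, γ i ≤ t * K := mul_le_mul_of_nonneg_left hγK ht0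
      linarith
  refine ⟨V, hgreatest1, ?_, ?_⟩
  · -- attainment
    classical
    refine ⟨fun i => if i ∈ S then (ρ₂ / ‖P i‖) • P i else 0,
      fun i => if i ∈ S then (1:ℝ) else 0,
      fun i => if i ∈ S then ρ₂ else 0, ?_, ?_, ?_⟩
    · intro i
      by_cases hi : i ∈ S
      · simp only [hi, if_true]
        refine ⟨?_, ?_, by linarith, by linarith, by norm_num, le_refl _⟩
        · intro j
          have : (C i).mulVec ((ρ₂ / ‖P i‖) • P i) j
              = (ρ₂ / ‖P i‖) * (C i).mulVec (P i) j := by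
            rw [Matrix.mulVec_smul]; rfl
          rw [WithLp.ofLp_smul, this]
          exact mul_nonpos_of_nonneg_of_nonpos (div_nonneg hρ2.le (norm_nonneg _)) (hPU i j)
        · rcases eq_or_ne ‖P i‖ 0 with hz | hz
          · have : P i = 0 := norm_eq_zero.mp hz
            rw [this, smul_zero, norm_zero]; exact hρ2.le
          · rw [norm_smul, Real.norm_eq_abs,
              abs_of_nonneg (div_nonneg hρ2.le (norm_nonneg _)), div_mul_cancel₀ _ hz]
      · simp only [hi, if_false]
        exact ⟨fun j => by
          simp [show ((0 : EuclideanSpace ℝ (Fin m)) : Fin m → ℝ) = 0 from rfl],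
          by simp, by simp, by simp, le_refl _, by norm_num⟩
    · have : ∑ i, (if i ∈ S then (1:ℝ) else 0) = (S.card : ℝ) := by
        rw [Finset.sum_ite_mem, Finset.univ_inter, Finset.sum_const, nsmul_eq_mul, mul_one]
      rw [this, hScard]
    · have hterm : ∀ i, ⟪y, (if i ∈ S then (ρ₂ / ‖P i‖) • P i else 0 :
          EuclideanSpace ℝ (Fin m))⟫ = (if i ∈ S then ρ₂ * ‖P i‖ else 0) := by
        intro i
        by_cases hi : i ∈ S
        · simp only [hi, if_true]
          rw [real_inner_smul_right, hyP i]
          rcases eq_or_ne ‖P i‖ 0 with hz | hz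
          · rw [hz]; ring
          · field_simp
        · simp only [hi, if_false, inner_zero_right]
      rw [Finset.sum_congr rfl fun i _ => hterm i, Finset.sum_ite_mem, Finset.univ_inter,
        Finset.mul_sum]
  · -- upper bound
    rintro r ⟨u, γ, σ, hfeas, hsum, rfl⟩
    have hterm : ∀ i, ⟪y, u i⟫ ≤ γ i * ‖P i‖ * ρ₂ := by
      intro i
      obtain ⟨hcone, hnorm, -, hσ2, hγ0, -⟩ := hfeas i
      have h1 : ⟪y, u i⟫ ≤ ‖P i‖ * ‖u i‖ := hinnerle i (u i) hcone
      nlinarith [norm_nonneg (P i), norm_nonneg (u i)]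
    calc ∑ i, ⟪y, u i⟫ ≤ ∑ i, γ i * ‖P i‖ * ρ₂ := Finset.sum_le_sum fun i _ => hterm i
      _ = ρ₂ * ∑ i, γ i * ‖P i‖ := by
          rw [Finset.mul_sum]; exact Finset.sum_congr rfl fun i _ => by ring
      _ ≤ ρ₂ * V := mul_le_mul_of_nonneg_left
          (hfrac γ (fun i => (hfeas i).2.2.2.2.1) (fun i => (hfeas i).2.2.2.2.2)
            hsum) hρ2.le
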